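/- Under the hypotheses of the previous statement (f ∈ L¹_unif(X), ω > θ_X, p ≥ 1), the tail integrals ∫_{d(a,x) ≥ r} exp(−ω·d(a,x)^p)|f(x)| dx tend to 0 as r → ∞, uniformly with respect to a ∈ X and to f in the unit ball of L¹_unif(X). -/
import Mathlib


open MeasureTheory Metric
open scoped ENNReal

/-- Packing/covering bound: the local `L¹` bound on `g` over `r₀`-balls gives a bound on the
integral of `g` over a ball of radius `R`, in terms of the measure of the slightly larger ball. -/
theorem aux_ball_int {X : Type*} [MetricSpace X] [MeasurableSpace X] [BorelSpace X]
    (μ : Measure X) {r₀ : ℝ} (hr₀ : 0 < r₀) (g : X → ℝ≥0∞)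
    (hloc : ∀ x : X, ∫⁻ y in ball x r₀, g y ∂μ ≤ 1)
    (a : X) (R : ℝ) (hfin : μ (ball a (R + r₀)) ≠ ∞) :
    (⨅ x : X, μ (ball x (r₀ / 2))) * ∫⁻ x in ball a R, g x ∂μ ≤ μ (ball a (R + r₀)) := by
  classical
  set V := ⨅ x : X, μ (ball x (r₀ / 2)) with hV
  by_cases hV0 : V = 0
  · simp [hV0]
  -- the family of `r₀`-separated subsets of `ball a R`
  set 𝒮 : Set (Set X) := {S | S ⊆ ball a R ∧ S.Pairwise fun x y => r₀ ≤ dist x y} with h𝒮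
  obtain ⟨M, hM⟩ : ∃ m, Maximal (· ∈ 𝒮) m := by
    refine zorn_subset 𝒮 fun c hc hchain => ?_
    refine ⟨⋃₀ c, ⟨Set.sUnion_subset fun s hs => (hc hs).1, ?_⟩,
      fun s hs => Set.subset_sUnion_of_mem hs⟩
    intro x hx y hy hxy
    obtain ⟨s, hs, hxs⟩ := hx
    obtain ⟨t, ht, hyt⟩ := hy
    rcases hchain.total hs ht with h | h
    · exact (hc ht).2 (h hxs) hyt hxy
    · exact (hc hs).2 hxs (h hyt) hxy
  obtain ⟨hMsub, hMsep⟩ := hM.1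
  -- any finite subset of `M` gives a packing bound
  have key : ∀ F : Finset X, ↑F ⊆ M → (F.card : ℝ≥0∞) * V ≤ μ (ball a (R + r₀)) := by
    intro F hF
    have hd : (↑F : Set X).PairwiseDisjoint fun x => ball x (r₀ / 2) := by
      intro x hx y hy hxy
      exact ball_disjoint_ball (by linarith [hMsep (hF hx) (hF hy) hxy])
    calc (F.card : ℝ≥0∞) * V = ∑ _x ∈ F, V := by
          rw [Finset.sum_const, nsmul_eq_mul]
      _ ≤ ∑ x ∈ F, μ (ball x (r₀ / 2)) := Finset.sum_le_sum fun x _ => iInf_le _ x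
      _ = μ (⋃ x ∈ F, ball x (r₀ / 2)) :=
          (measure_biUnion_finset hd fun _ _ => measurableSet_ball).symm
      _ ≤ μ (ball a (R + r₀)) := by
          refine measure_mono ?_
          intro y hy
          obtain ⟨x, hxF, hyx⟩ := Set.mem_iUnion₂.mp hy
          have h1 := mem_ball.mp (hMsub (hF hxF))
          have h2 := mem_ball.mp hyx
          have h3 := dist_triangle y x a
          exact mem_ball.mpr (by linarith)
  -- hence `M` is finite
  have hMfin : M.Finite := by
    by_contra hinf
    obtain ⟨n, hn⟩ := ENNReal.exists_nat_gt
      (show μ (ball a (R + r₀)) / V ≠ ∞ from (ENNReal.div_lt_top hfin hV0).ne)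
    obtain ⟨t, htM, htfin, htcard⟩ := Set.Infinite.exists_subset_ncard_eq
      hinf n
    haveI := htfin.fintype
    have hcard : (htfin.toFinset.card : ℝ≥0∞) = n := by
      rw [← htcard, Set.ncard_eq_toFinset_card _ htfin]
    have := key htfin.toFinset (by rwa [Set.Finite.coe_toFinset])
    rw [hcard] at this
    have hle : (n : ℝ≥0∞) ≤ μ (ball a (R + r₀)) / V :=
      (ENNReal.le_div_iff_mul_le (Or.inl hV0) (Or.inr hfin)).mpr this
    exact absurd hle hn.not_ge
  -- `M` covers `ball a R` with `r₀`-balls, by maximality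
  have hcover : ball a R ⊆ ⋃ x ∈ M, ball x r₀ := by
    intro z hz
    by_cases hzM : ∃ x ∈ M, dist z x < r₀
    · obtain ⟨x, hxM, hxd⟩ := hzM
      exact Set.mem_biUnion hxM (mem_ball.mpr hxd)
    · exfalso
      push_neg at hzM
      have hzM' : z ∉ M := fun h => absurd (hzM z h) (by simpa using hr₀)
      have hins : insert z M ∈ 𝒮 := by
        refine ⟨Set.insert_subset hz hMsub, ?_⟩
        refine Set.Pairwise.insert hMsep ?_
        intro x hxM hxz
        constructor
        · exact hzM x hxM
        · rw [dist_comm]; exact hzM x hxM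
      exact hzM' (hM.2 hins (Set.subset_insert z M) (Set.mem_insert z M))
  -- put everything together
  haveI : Finite ↥M := hMfin.to_subtype
  haveI := hMfin.fintype
  calc V * ∫⁻ x in ball a R, g x ∂μ
      ≤ V * ∑' i : ↥M, ∫⁻ x in ball (i : X) r₀, g x ∂μ := by
        refine mul_le_mul_right ?_ _
        have h1 : μ.restrict (ball a R) ≤ μ.restrict (⋃ i : ↥M, ball (i : X) r₀) := by
          refine Measure.restrict_mono ?_ le_rfl
          rwa [Set.iUnion_coe_set]
        calc ∫⁻ x in ball a R, g x ∂μ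
            ≤ ∫⁻ x, g x ∂(Measure.sum fun i : ↥M => μ.restrict (ball (i : X) r₀)) :=
              lintegral_mono' (h1.trans Measure.restrict_iUnion_le) le_rfl
          _ = ∑' i : ↥M, ∫⁻ x in ball (i : X) r₀, g x ∂μ := lintegral_sum_measure _ _
    _ ≤ V * ∑' _i : ↥M, (1 : ℝ≥0∞) :=
        mul_le_mul_right (ENNReal.tsum_le_tsum fun i : ↥M => hloc (i : X)) _
    _ = (hMfin.toFinset.card : ℝ≥0∞) * V := by
        rw [tsum_fintype]
        simp [Finset.card_univ, Set.Finite.card_toFinset, mul_comm]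
    _ ≤ μ (ball a (R + r₀)) := key hMfin.toFinset (by rw [Set.Finite.coe_toFinset])

/-- The tail integrals `∫_{d(a,x) ≥ r} exp(-ω d(a,x)^p) |f(x)| dx` tend to `0`
as `r → ∞`, uniformly in `a ∈ X` and in `f` in the unit ball of the
uniformly local `L¹` space. -/
theorem exp_decay_mul_uniformlyLocalL1_tail_tendsto_zero
    {X : Type*} [MetricSpace X] [MeasurableSpace X] [BorelSpace X]
    (μ : Measure X) (r₀ θ w₂ : ℝ) (hr₀ : 0 < r₀) (hθ : 0 < θ) (hw₂ : 0 < w₂)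
    (hgrowth : ∀ (a : X) (r : ℝ), 0 < r → μ (ball a r) ≤ ENNReal.ofReal (w₂ * Real.exp (θ * r)))
    (hVi : ∀ r : ℝ, 0 < r → 0 < ⨅ x : X, μ (ball x r))
    (p ω : ℝ) (hp : 1 ≤ p) (hω : θ < ω) :
    ∀ ε : ℝ≥0∞, 0 < ε → ∃ R : ℝ, ∀ r : ℝ, R ≤ r → ∀ (a : X) (f : X → ℝ),
      (⨆ x : X, ∫⁻ y in ball x r₀, (‖f y‖₊ : ℝ≥0∞) ∂μ) ≤ 1 →
      ∫⁻ x in {x : X | r ≤ dist a x},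
          ENNReal.ofReal (Real.exp (-ω * dist a x ^ p)) * (‖f x‖₊ : ℝ≥0∞) ∂μ ≤ ε := by
  intro ε hε
  have hω0 : 0 < ω := hθ.trans hω
  set c := ω - θ with hc
  have hc0 : 0 < c := sub_pos.mpr hω
  set V := ⨅ x : X, μ (ball x (r₀ / 2)) with hV
  have hV0 : 0 < V := hVi _ (by linarith)
  have hq1 : ENNReal.ofReal (Real.exp (-c)) < 1 :=
    ENNReal.ofReal_lt_one.mpr (Real.exp_lt_one_iff.mpr (by linarith))
  have hKnn : (0:ℝ) ≤ w₂ * Real.exp (θ * (1 + r₀)) := mul_nonneg hw₂.le (Real.exp_nonneg _)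
  set C := ENNReal.ofReal (w₂ * Real.exp (θ * (1 + r₀))) * V⁻¹
      * (1 - ENNReal.ofReal (Real.exp (-c)))⁻¹ with hC
  have h1q : (1 : ℝ≥0∞) - ENNReal.ofReal (Real.exp (-c)) ≠ 0 :=
    fun h => absurd (tsub_eq_zero_iff_le.mp h) hq1.not_ge
  have hCtop : C ≠ ∞ :=
    ENNReal.mul_ne_top
      (ENNReal.mul_ne_top ENNReal.ofReal_ne_top (ENNReal.inv_ne_top.mpr hV0.ne'))
      (ENNReal.inv_ne_top.mpr h1q)
  set δ := ε / C with hδ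
  have hδ0 : 0 < δ := ENNReal.div_pos hε.ne' hCtop
  have hmin : min δ 1 ≠ 0 := (lt_min hδ0 one_pos).ne'
  have hmintop : min δ 1 ≠ ∞ := ((min_le_right δ 1).trans_lt ENNReal.one_lt_top).ne
  set s := (min δ 1).toReal with hs
  have hs0 : 0 < s := ENNReal.toReal_pos hmin hmintop
  refine ⟨max 1 (-Real.log s / c), fun r hr a f hf => ?_⟩
  have hr1 : (1 : ℝ) ≤ r := le_trans (le_max_left _ _) hr
  have hrs : Real.exp (-(c * r)) ≤ s := by
    have h1 : -Real.log s / c ≤ r := le_trans (le_max_right _ _) hr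
    have h2 : -Real.log s ≤ c * r := by
      rw [div_le_iff₀ hc0] at h1; linarith
    calc Real.exp (-(c * r)) ≤ Real.exp (Real.log s) := Real.exp_le_exp.mpr (by linarith)
      _ = s := Real.exp_log hs0
  have hrδ : ENNReal.ofReal (Real.exp (-(c * r))) ≤ δ :=
    le_trans (le_trans (ENNReal.ofReal_le_ofReal hrs)
      (by rw [hs, ENNReal.ofReal_toReal hmintop])) (min_le_left _ _)
  have hloc : ∀ x : X, ∫⁻ y in ball x r₀, (‖f y‖₊ : ℝ≥0∞) ∂μ ≤ 1 :=
    fun x => le_trans (le_iSup (fun x => ∫⁻ y in ball x r₀, (‖f y‖₊ : ℝ≥0∞) ∂μ) x) hf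
  have hVtop : V ≠ ∞ :=
    ((iInf_le _ a).trans_lt ((hgrowth a _ (half_pos hr₀)).trans_lt ENNReal.ofReal_lt_top)).ne
  have hMfin : ∀ ρ : ℝ, 0 < ρ → μ (ball a ρ) ≠ ∞ := fun ρ hρ =>
    ((hgrowth a ρ hρ).trans_lt ENNReal.ofReal_lt_top).ne
  -- annuli
  set A : ℕ → Set X := fun n => {x | r + n ≤ dist a x} ∩ {x | dist a x < r + n + 1} with hA
  have hdistm : Measurable fun x : X => dist a x := (continuous_const.dist continuous_id).measurable
  have hAm : ∀ n, MeasurableSet (A n) := fun n =>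
    (measurableSet_le measurable_const hdistm).inter (measurableSet_lt hdistm measurable_const)
  have hTsub : {x : X | r ≤ dist a x} ⊆ ⋃ n, A n := by
    intro x hx
    have hx' : r ≤ dist a x := hx
    have h0 : 0 ≤ dist a x - r := by linarith
    refine Set.mem_iUnion.mpr ⟨⌊dist a x - r⌋₊, ⟨?_, ?_⟩⟩
    · have := Nat.floor_le h0
      simp only [Set.mem_setOf_eq]; linarith
    · have := Nat.lt_floor_add_one (dist a x - r)
      simp only [Set.mem_setOf_eq]; linarith
  -- the real exponential identity
  have hreal : ∀ n : ℕ, Real.exp (-(ω * (r + n))) * (w₂ * Real.exp (θ * (r + n + 1 + r₀)))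
      = (w₂ * Real.exp (θ * (1 + r₀)) * Real.exp (-(c * r))) * Real.exp (-c) ^ n := by
    intro n
    have h1 : Real.exp (-(ω * (r + n))) * Real.exp (θ * (r + n + 1 + r₀))
        = Real.exp (θ * (1 + r₀)) * (Real.exp (-(c * r)) * Real.exp ((n : ℝ) * -c)) := by
      rw [← Real.exp_add, ← Real.exp_add, ← Real.exp_add]
      congr 1
      rw [hc]; ring
    calc Real.exp (-(ω * (r + n))) * (w₂ * Real.exp (θ * (r + n + 1 + r₀)))
        = w₂ * (Real.exp (-(ω * (r + n))) * Real.exp (θ * (r + n + 1 + r₀))) := by ring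
      _ = w₂ * (Real.exp (θ * (1 + r₀)) * (Real.exp (-(c * r)) * Real.exp ((n : ℝ) * -c))) := by
          rw [h1]
      _ = (w₂ * Real.exp (θ * (1 + r₀)) * Real.exp (-(c * r))) * Real.exp (-c) ^ n := by
          rw [Real.exp_nat_mul]; ring
  -- per-annulus bound
  have hann : ∀ n : ℕ,
      ∫⁻ x in A n, ENNReal.ofReal (Real.exp (-ω * dist a x ^ p)) * (‖f x‖₊ : ℝ≥0∞) ∂μ
      ≤ ENNReal.ofReal (w₂ * Real.exp (θ * (1 + r₀)) * Real.exp (-(c * r)))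
          * ENNReal.ofReal (Real.exp (-c)) ^ n * V⁻¹ := by
    intro n
    have hn0 : (0:ℝ) ≤ n := Nat.cast_nonneg n
    have hpt : ∀ x ∈ A n, ENNReal.ofReal (Real.exp (-ω * dist a x ^ p)) * (‖f x‖₊ : ℝ≥0∞)
        ≤ ENNReal.ofReal (Real.exp (-(ω * (r + n)))) * (‖f x‖₊ : ℝ≥0∞) := by
      intro x hx
      have hx1 : r + n ≤ dist a x := hx.1
      refine mul_le_mul_left (ENNReal.ofReal_le_ofReal (Real.exp_le_exp.mpr ?_)) _
      have hd1 : (1:ℝ) ≤ dist a x := by linarith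
      have hdp : dist a x ≤ dist a x ^ p := by
        calc dist a x = dist a x ^ (1:ℝ) := (Real.rpow_one _).symm
          _ ≤ dist a x ^ p := Real.rpow_le_rpow_of_exponent_le hd1 hp
      have := mul_le_mul_of_nonneg_left (hx1.trans hdp) hω0.le
      linarith
    have hball := aux_ball_int μ hr₀ (fun x => (‖f x‖₊ : ℝ≥0∞)) hloc a (r + n + 1)
      (hMfin _ (by linarith))
    have hI : ∫⁻ x in ball a (r + n + 1), (‖f x‖₊ : ℝ≥0∞) ∂μ
        ≤ ENNReal.ofReal (w₂ * Real.exp (θ * (r + n + 1 + r₀))) * V⁻¹ := by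
      have h2 : V * ∫⁻ x in ball a (r + n + 1), (‖f x‖₊ : ℝ≥0∞) ∂μ
          ≤ ENNReal.ofReal (w₂ * Real.exp (θ * (r + n + 1 + r₀))) :=
        hball.trans (hgrowth a _ (by linarith))
      calc ∫⁻ x in ball a (r + n + 1), (‖f x‖₊ : ℝ≥0∞) ∂μ
          = V⁻¹ * (V * ∫⁻ x in ball a (r + n + 1), (‖f x‖₊ : ℝ≥0∞) ∂μ) := by
            rw [← mul_assoc, ENNReal.inv_mul_cancel hV0.ne' hVtop, one_mul]
        _ ≤ V⁻¹ * ENNReal.ofReal (w₂ * Real.exp (θ * (r + n + 1 + r₀))) :=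
            mul_le_mul_right h2 _
        _ = ENNReal.ofReal (w₂ * Real.exp (θ * (r + n + 1 + r₀))) * V⁻¹ := mul_comm _ _
    calc ∫⁻ x in A n, ENNReal.ofReal (Real.exp (-ω * dist a x ^ p)) * (‖f x‖₊ : ℝ≥0∞) ∂μ
        ≤ ∫⁻ x in A n, ENNReal.ofReal (Real.exp (-(ω * (r + n)))) * (‖f x‖₊ : ℝ≥0∞) ∂μ :=
          setLIntegral_mono' (hAm n) hpt
      _ = ENNReal.ofReal (Real.exp (-(ω * (r + n)))) * ∫⁻ x in A n, (‖f x‖₊ : ℝ≥0∞) ∂μ :=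
          lintegral_const_mul' _ _ ENNReal.ofReal_ne_top
      _ ≤ ENNReal.ofReal (Real.exp (-(ω * (r + n))))
            * ∫⁻ x in ball a (r + n + 1), (‖f x‖₊ : ℝ≥0∞) ∂μ := by
          refine mul_le_mul_right (lintegral_mono' (Measure.restrict_mono ?_ le_rfl) le_rfl) _
          intro x hx
          have hx2 : dist a x < r + n + 1 := hx.2
          exact mem_ball.mpr (by rw [dist_comm]; exact hx2)
      _ ≤ ENNReal.ofReal (Real.exp (-(ω * (r + n))))
            * (ENNReal.ofReal (w₂ * Real.exp (θ * (r + n + 1 + r₀))) * V⁻¹) :=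
          mul_le_mul_right hI _
      _ = ENNReal.ofReal (w₂ * Real.exp (θ * (1 + r₀)) * Real.exp (-(c * r)))
            * ENNReal.ofReal (Real.exp (-c)) ^ n * V⁻¹ := by
          rw [← mul_assoc, ← ENNReal.ofReal_mul (Real.exp_nonneg _), hreal n,
            ENNReal.ofReal_mul (mul_nonneg hKnn (Real.exp_nonneg _)),
            ENNReal.ofReal_pow (Real.exp_nonneg _)]
  -- sum it all up
  calc ∫⁻ x in {x : X | r ≤ dist a x},
        ENNReal.ofReal (Real.exp (-ω * dist a x ^ p)) * (‖f x‖₊ : ℝ≥0∞) ∂μ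
      ≤ ∑' n : ℕ, ∫⁻ x in A n,
          ENNReal.ofReal (Real.exp (-ω * dist a x ^ p)) * (‖f x‖₊ : ℝ≥0∞) ∂μ := by
        refine le_trans (lintegral_mono'
          (le_trans (Measure.restrict_mono hTsub le_rfl) Measure.restrict_iUnion_le) le_rfl) ?_
        exact le_of_eq (lintegral_sum_measure _ _)
    _ ≤ ∑' n : ℕ, ENNReal.ofReal (w₂ * Real.exp (θ * (1 + r₀)) * Real.exp (-(c * r)))
          * ENNReal.ofReal (Real.exp (-c)) ^ n * V⁻¹ := ENNReal.tsum_le_tsum hann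
    _ = ENNReal.ofReal (w₂ * Real.exp (θ * (1 + r₀)) * Real.exp (-(c * r))) * V⁻¹
          * (1 - ENNReal.ofReal (Real.exp (-c)))⁻¹ := by
        rw [ENNReal.tsum_mul_right, ENNReal.tsum_mul_left, ENNReal.tsum_geometric,
          mul_right_comm]
    _ = ENNReal.ofReal (Real.exp (-(c * r))) * C := by
        rw [hC, ENNReal.ofReal_mul hKnn]
        ring
    _ ≤ δ * C := mul_le_mul_left hrδ _
    _ ≤ ε := by rw [hδ, mul_comm]; exact ENNReal.mul_div_le
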